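/- Let t₀ > 0, β > 0 and p > 0. Assume S(c) ≠ ∅ for every c ∈ ℝ^m, and assume z₀ : ℝ^m → H is a continuous map such that for every c ∈ ℝ^m one has z₀(c) ∈ S(c) and ‖z₀(c)‖ ≤ ‖y‖ for every y ∈ S(c). Let w : [t₀,∞) → ℝ^m be continuous with w(t) → c* as t → ∞, and let z : [t₀,∞) → H be such that for every t ≥ t₀, z(t) minimizes u ↦ max_{i=1,…,m}(f_i(u) − w_i(t)) + (β/(2t^p))‖u‖² over H. Then z(t) converges strongly to z₀(c*), i.e. ‖z(t) − z₀(c*)‖ → 0 as t → ∞. -/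

import Mathlib

open Filter Topology
open scoped NNReal

set_option linter.unusedSectionVars false
set_option linter.unusedVariables false

section Aux
variable {H : Type*} [NormedAddCommGroup H] [InnerProductSpace ℝ H] [CompleteSpace H]
variable {m : ℕ}

noncomputable def auxPhi (f : Fin m → H → ℝ) (c : Fin m → ℝ) (u : H) : ℝ :=
  ⨆ i, (f i u - c i)

variable {f : Fin m → H → ℝ}

lemma aux_le_phi (c : Fin m → ℝ) (u : H) (i : Fin m) :
    f i u - c i ≤ auxPhi f c u := by
  exact le_ciSup (Set.Finite.bddAbove (Set.finite_range (fun j => f j u - c j))) i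

lemma aux_phi_le (hm : 0 < m) {c : Fin m → ℝ} {u : H} {a : ℝ}
    (h : ∀ i, f i u - c i ≤ a) : auxPhi f c u ≤ a := by
  haveI : Nonempty (Fin m) := ⟨⟨0, hm⟩⟩
  exact ciSup_le h

lemma aux_mid_norm_sq (x y : H) :
    ‖(2⁻¹ : ℝ) • (x + y)‖ ^ 2 = (2 * ‖x‖ ^ 2 + 2 * ‖y‖ ^ 2 - ‖x - y‖ ^ 2) / 4 := by
  have h := parallelogram_law_with_norm ℝ x y
  have h2 : ‖(2⁻¹ : ℝ) • (x + y)‖ = 2⁻¹ * ‖x + y‖ := by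
    rw [norm_smul]; norm_num
  rw [h2]
  nlinarith [h]

lemma aux_phi_mid (hm : 0 < m) (hconv : ∀ i, ConvexOn ℝ Set.univ (f i))
    (c : Fin m → ℝ) (x y : H) :
    auxPhi f c ((2⁻¹ : ℝ) • (x + y)) ≤ (auxPhi f c x + auxPhi f c y) / 2 := by
  apply aux_phi_le hm
  intro i
  have h := (hconv i).2 (Set.mem_univ x) (Set.mem_univ y)
    (by norm_num : (0:ℝ) ≤ 2⁻¹) (by norm_num : (0:ℝ) ≤ 2⁻¹) (by norm_num)
  have hx := aux_le_phi (f := f) c x i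
  have hy := aux_le_phi (f := f) c y i
  have hsm : (2⁻¹ : ℝ) • (x + y) = (2⁻¹ : ℝ) • x + (2⁻¹ : ℝ) • y := smul_add _ _ _
  simp only [smul_eq_mul] at h
  rw [hsm]
  linarith

lemma aux_phi_shift (hm : 0 < m) (c c' : Fin m → ℝ) (u : H) :
    auxPhi f c u ≤ auxPhi f c' u + ‖c - c'‖ := by
  apply aux_phi_le hm
  intro i
  have h1 : f i u - c' i ≤ auxPhi f c' u := aux_le_phi c' u i
  have h2 : |c' i - c i| ≤ ‖c - c'‖ := by
    have h3 := norm_le_pi_norm (c' - c) i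
    rw [norm_sub_rev c c']
    simpa [Real.norm_eq_abs] using h3
  have h4 := (abs_le.1 h2).2
  linarith

lemma aux_phi_cont (hm : 0 < m) (hf : ∀ i, Continuous (f i)) (c : Fin m → ℝ) :
    Continuous (auxPhi f c) := by
  haveI : Nonempty (Fin m) := ⟨⟨0, hm⟩⟩
  have he : auxPhi f c = fun u => Finset.univ.sup' Finset.univ_nonempty (fun i => f i u - c i) := by
    funext u
    rw [Finset.sup'_univ_eq_ciSup]
    rfl
  rw [he]
  exact Continuous.finset_sup'_apply Finset.univ_nonempty
    (fun i _ => (hf i).sub continuous_const)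

def AuxMin (f : Fin m → H → ℝ) (l : ℝ) (c : Fin m → ℝ) (v : H) : Prop :=
  ∀ u : H, auxPhi f c v + l * ‖v‖ ^ 2 ≤ auxPhi f c u + l * ‖u‖ ^ 2

lemma aux_strong (hm : 0 < m) (hconv : ∀ i, ConvexOn ℝ Set.univ (f i))
    {l : ℝ} (hl : 0 < l) {c : Fin m → ℝ} {v : H} (hv : AuxMin f l c v) (u : H) :
    auxPhi f c v + l * ‖v‖ ^ 2 + l / 2 * ‖u - v‖ ^ 2 ≤ auxPhi f c u + l * ‖u‖ ^ 2 := by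
  have h1 := hv ((2⁻¹ : ℝ) • (u + v))
  have h2 := aux_phi_mid hm hconv c u v
  have h3 := aux_mid_norm_sq u v
  rw [h3] at h1
  nlinarith [h1, h2]

lemma aux_dist_sq (hm : 0 < m) (hconv : ∀ i, ConvexOn ℝ Set.univ (f i))
    {l : ℝ} (hl : 0 < l) {c : Fin m → ℝ} {v : H} (hv : AuxMin f l c v) {y : H}
    (hy : auxPhi f c y ≤ auxPhi f c v) :
    ‖y - v‖ ^ 2 ≤ 2 * (‖y‖ ^ 2 - ‖v‖ ^ 2) := by
  have h := aux_strong hm hconv hl hv y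
  have h2 : l / 2 * ‖y - v‖ ^ 2 ≤ l / 2 * (2 * (‖y‖ ^ 2 - ‖v‖ ^ 2)) := by linarith
  exact (mul_le_mul_iff_right₀ (half_pos hl)).1 h2

lemma aux_two (hm : 0 < m) (hconv : ∀ i, ConvexOn ℝ Set.univ (f i))
    {l l' : ℝ} (hl : 0 < l) (hl' : 0 < l') {c : Fin m → ℝ} {v v' : H}
    (hv : AuxMin f l c v) (hv' : AuxMin f l' c v') :
    (l + l') / 2 * ‖v - v'‖ ^ 2 ≤ (l' - l) * (‖v‖ ^ 2 - ‖v'‖ ^ 2) := by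
  have h1 := aux_strong hm hconv hl hv v'
  have h2 := aux_strong hm hconv hl' hv' v
  rw [norm_sub_rev] at h1
  nlinarith [h1, h2]

lemma aux_mono (hm : 0 < m) (hconv : ∀ i, ConvexOn ℝ Set.univ (f i))
    {l l' : ℝ} (hl : 0 < l) (hll' : l ≤ l') {c : Fin m → ℝ} {v v' : H}
    (hv : AuxMin f l c v) (hv' : AuxMin f l' c v') : ‖v'‖ ≤ ‖v‖ := by
  by_contra hcon
  push_neg at hcon
  have key := aux_two hm hconv hl (lt_of_lt_of_le hl hll') hv hv'
  have hsq : ‖v‖ ^ 2 < ‖v'‖ ^ 2 := by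
    have := norm_nonneg v
    nlinarith
  have hrhs : (l' - l) * (‖v‖ ^ 2 - ‖v'‖ ^ 2) ≤ 0 :=
    mul_nonpos_of_nonneg_of_nonpos (by linarith) (by linarith)
  have hD : ‖v - v'‖ ^ 2 ≤ 0 := by nlinarith [sq_nonneg ‖v - v'‖]
  have hD0 : ‖v - v'‖ = 0 := by nlinarith [norm_nonneg (v - v'), sq_nonneg ‖v - v'‖]
  have : v = v' := by
    have := norm_sub_eq_zero_iff.1 hD0
    exact this
  rw [this] at hcon
  exact lt_irrefl _ hcon

lemma aux_cstab (hm : 0 < m) (hconv : ∀ i, ConvexOn ℝ Set.univ (f i))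
    {l : ℝ} (hl : 0 < l) {c c' : Fin m → ℝ} {v v' : H}
    (hv : AuxMin f l c v) (hv' : AuxMin f l c' v') :
    l * ‖v - v'‖ ^ 2 ≤ 2 * ‖c - c'‖ := by
  have h1 := aux_strong hm hconv hl hv v'
  have h2 := aux_strong hm hconv hl hv' v
  rw [norm_sub_rev] at h1
  have s1 := aux_phi_shift (f := f) hm c c' v'
  have s2 := aux_phi_shift (f := f) hm c' c v
  rw [norm_sub_rev c' c] at s2
  linarith

lemma aux_exists (hm : 0 < m) (hconv : ∀ i, ConvexOn ℝ Set.univ (f i))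
    (hf : ∀ i, Continuous (f i)) {l : ℝ} (hl : 0 < l) (c : Fin m → ℝ)
    (hlb : ∃ b : ℝ, ∀ u, b ≤ auxPhi f c u) : ∃ v, AuxMin f l c v := by
  obtain ⟨b, hb⟩ := hlb
  set F : H → ℝ := fun u => auxPhi f c u + l * ‖u‖ ^ 2 with hF
  have hFc : Continuous F :=
    (aux_phi_cont hm hf c).add (continuous_const.mul (continuous_norm.pow 2))
  have hbdd : BddBelow (Set.range F) := by
    refine ⟨b, ?_⟩
    rintro _ ⟨u, rfl⟩
    have h0 : 0 ≤ l * ‖u‖ ^ 2 := mul_nonneg hl.le (sq_nonneg _)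
    have := hb u
    simp only [hF]
    linarith
  have hne : (Set.range F).Nonempty := ⟨F 0, 0, rfl⟩
  set d := sInf (Set.range F) with hd
  have hsel : ∀ n : ℕ, ∃ u : H, F u < d + ((n:ℝ) + 1)⁻¹ := by
    intro n
    obtain ⟨a, ⟨u, rfl⟩, ha⟩ := Real.lt_sInf_add_pos hne
      (by positivity : (0:ℝ) < ((n:ℝ) + 1)⁻¹)
    exact ⟨u, ha⟩
  choose u hu using hsel
  have hdle : ∀ x, d ≤ F x := fun x => csInf_le hbdd ⟨x, rfl⟩
  have key : ∀ n k : ℕ, l / 2 * ‖u n - u k‖ ^ 2 ≤ (F (u n) - d) + (F (u k) - d) := by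
    intro n k
    have h1 := aux_phi_mid hm hconv c (u n) (u k)
    have h3 := aux_mid_norm_sq (u n) (u k)
    have h4 := hdle ((2⁻¹ : ℝ) • (u n + u k))
    simp only [hF] at h4 ⊢
    rw [h3] at h4
    nlinarith [h1, h4]
  have hcauchy : CauchySeq u := by
    apply cauchySeq_of_le_tendsto_0 (fun N : ℕ => Real.sqrt ((4 * ((N:ℝ) + 1)⁻¹) / l))
    · intro n k N hn hk
      have hn' : ((n:ℝ) + 1)⁻¹ ≤ ((N:ℝ) + 1)⁻¹ := by
        apply inv_anti₀ (by positivity)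
        have : (N:ℝ) ≤ (n:ℝ) := by exact_mod_cast hn
        linarith
      have hk' : ((k:ℝ) + 1)⁻¹ ≤ ((N:ℝ) + 1)⁻¹ := by
        apply inv_anti₀ (by positivity)
        have : (N:ℝ) ≤ (k:ℝ) := by exact_mod_cast hk
        linarith
      have hD2 : ‖u n - u k‖ ^ 2 ≤ (4 * ((N:ℝ) + 1)⁻¹) / l := by
        rw [le_div_iff₀ hl]
        have := key n k
        have h5 := hu n
        have h6 := hu k
        clear_value d F
        linarith
      have : dist (u n) (u k) = ‖u n - u k‖ := dist_eq_norm _ _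
      rw [this, ← Real.sqrt_sq (norm_nonneg (u n - u k))]
      exact Real.sqrt_le_sqrt hD2
    · have h1 : Tendsto (fun N : ℕ => (4 * ((N:ℝ) + 1)⁻¹) / l) atTop (𝓝 0) := by
        have h0 : Tendsto (fun N : ℕ => ((N:ℝ) + 1)⁻¹) atTop (𝓝 0) := by
          simpa [one_div] using tendsto_one_div_add_atTop_nhds_zero_nat (𝕜 := ℝ)
        have h2 : Tendsto (fun N : ℕ => 4 * ((N:ℝ) + 1)⁻¹) atTop (𝓝 0) := by
          simpa using h0.const_mul (4:ℝ)
        simpa using h2.div_const l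
      have := (Real.continuous_sqrt.tendsto 0).comp h1
      simpa [Real.sqrt_zero, Function.comp_def] using this
  obtain ⟨v, hv⟩ := cauchySeq_tendsto_of_complete hcauchy
  have h1 : Tendsto (fun n => F (u n)) atTop (𝓝 (F v)) := (hFc.tendsto v).comp hv
  have h2 : Tendsto (fun n : ℕ => d + ((n:ℝ) + 1)⁻¹) atTop (𝓝 d) := by
    have h0 : Tendsto (fun n : ℕ => ((n:ℝ) + 1)⁻¹) atTop (𝓝 0) := by
      simpa [one_div] using tendsto_one_div_add_atTop_nhds_zero_nat (𝕜 := ℝ)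
    simpa using tendsto_const_nhds.add h0
  have hFvd : F v ≤ d :=
    le_of_tendsto_of_tendsto' h1 h2 (fun n => (hu n).le)
  refine ⟨v, fun x => ?_⟩
  have := hFvd.trans (hdle x)
  simpa [hF] using this

lemma aux_pointwise (hm : 0 < m) (hconv : ∀ i, ConvexOn ℝ Set.univ (f i))
    (hf : ∀ i, Continuous (f i)) {c : Fin m → ℝ} {z₀c : H}
    (hmem : ∀ y, auxPhi f c z₀c ≤ auxPhi f c y)
    (hmin : ∀ y : H, (∀ x, auxPhi f c y ≤ auxPhi f c x) → ‖z₀c‖ ≤ ‖y‖)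
    {η : ℝ} (hη : 0 < η) :
    ∃ lbar : ℝ, 0 < lbar ∧ ∀ v, AuxMin f lbar c v → ‖z₀c‖ ^ 2 - ‖v‖ ^ 2 ≤ η := by
  set lam : ℕ → ℝ := fun n => ((n:ℝ) + 1)⁻¹ with hlam
  have hlampos : ∀ n : ℕ, 0 < lam n := fun n => by positivity
  have hlamanti : ∀ n k : ℕ, n ≤ k → lam k ≤ lam n := by
    intro n k hnk
    apply inv_anti₀ (by positivity)
    have : (n:ℝ) ≤ (k:ℝ) := by exact_mod_cast hnk
    linarith
  have hex : ∀ n : ℕ, ∃ v, AuxMin f (lam n) c v := fun n =>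
    aux_exists hm hconv hf (hlampos n) c ⟨auxPhi f c z₀c, hmem⟩
  choose v hv using hex
  set a : ℕ → ℝ := fun n => ‖v n‖ ^ 2 with ha
  have hamono : Monotone a := by
    intro n k hnk
    have h := aux_mono hm hconv (hlampos k) (hlamanti n k hnk) (hv k) (hv n)
    exact pow_le_pow_left₀ (norm_nonneg _) h 2
  have habd : ∀ n, a n ≤ ‖z₀c‖ ^ 2 := by
    intro n
    have h := aux_dist_sq hm hconv (hlampos n) (hv n) (hmem (v n))
    have h0 := sq_nonneg ‖z₀c - v n‖
    simp only [ha]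
    nlinarith
  have hbdd : BddAbove (Set.range a) := ⟨‖z₀c‖ ^ 2, by rintro _ ⟨n, rfl⟩; exact habd n⟩
  set L := ⨆ n, a n with hL
  have haL : Tendsto a atTop (𝓝 L) := tendsto_atTop_ciSup hamono hbdd
  have haleL : ∀ n, a n ≤ L := fun n => le_ciSup hbdd n
  -- Cauchy
  have hest : ∀ n k : ℕ, n ≤ k → ‖v n - v k‖ ^ 2 ≤ 2 * (L - a n) := by
    intro n k hnk
    have key := aux_two hm hconv (hlampos k) (hlampos n) (hv k) (hv n)
    rw [norm_sub_rev] at key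
    have h1 : lam n - lam k ≤ lam k + lam n := by
      have := (hlampos k).le
      linarith
    have h2 : a k - a n ≤ L - a n := by have := haleL k; linarith
    have h3 : 0 ≤ a k - a n := by have := hamono hnk; linarith
    have h4 : (lam n - lam k) * (a k - a n) ≤ (lam k + lam n) * (L - a n) := by
      apply mul_le_mul h1 h2 h3
      have := (hlampos k).le
      have := (hlampos n).le
      linarith
    have e1 : a k = ‖v k‖ ^ 2 := rfl
    have e2 : a n = ‖v n‖ ^ 2 := rfl
    rw [e1, e2] at h4
    have h5 : (lam k + lam n) / 2 * ‖v n - v k‖ ^ 2 ≤ (lam k + lam n) / 2 * (2 * (L - a n)) := by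
      rw [e2]
      linarith [key, h4]
    exact (mul_le_mul_iff_right₀ (by have := hlampos k; have := hlampos n; linarith)).1 h5
  have hcauchy : CauchySeq v := by
    apply cauchySeq_of_le_tendsto_0 (fun N : ℕ => Real.sqrt (2 * (L - a N)))
    · intro n k N hn hk
      rcases le_total n k with hnk | hkn
      · have h := hest n k hnk
        have h2 : ‖v n - v k‖ ^ 2 ≤ 2 * (L - a N) := by
          have := hamono hn
          linarith
        rw [dist_eq_norm, ← Real.sqrt_sq (norm_nonneg (v n - v k))]
        exact Real.sqrt_le_sqrt h2
      · have h := hest k n hkn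
        have h2 : ‖v k - v n‖ ^ 2 ≤ 2 * (L - a N) := by
          have := hamono hk
          linarith
        rw [dist_comm, dist_eq_norm, ← Real.sqrt_sq (norm_nonneg (v k - v n))]
        exact Real.sqrt_le_sqrt h2
    · have h1 : Tendsto (fun N : ℕ => 2 * (L - a N)) atTop (𝓝 0) := by
        have h2 : Tendsto (fun N : ℕ => L - a N) atTop (𝓝 (L - L)) :=
          tendsto_const_nhds.sub haL
        have h3 : Tendsto (fun N : ℕ => L - a N) atTop (𝓝 0) := by simpa using h2
        simpa using h3.const_mul (2:ℝ)
      have h9 := (Real.continuous_sqrt.tendsto 0).comp h1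
      rw [Real.sqrt_zero] at h9
      exact h9
  obtain ⟨vinf, hvinf⟩ := cauchySeq_tendsto_of_complete hcauchy
  -- vinf is a minimizer of auxPhi f c
  have hphiv : ∀ n, auxPhi f c (v n) ≤ auxPhi f c z₀c + lam n * ‖z₀c‖ ^ 2 := by
    intro n
    have h := hv n z₀c
    have h0 : 0 ≤ lam n * ‖v n‖ ^ 2 := mul_nonneg (hlampos n).le (sq_nonneg _)
    linarith
  have hphitend : Tendsto (fun n => auxPhi f c (v n)) atTop (𝓝 (auxPhi f c vinf)) :=
    ((aux_phi_cont hm hf c).tendsto vinf).comp hvinf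
  have hrhstend : Tendsto (fun n => auxPhi f c z₀c + lam n * ‖z₀c‖ ^ 2) atTop
      (𝓝 (auxPhi f c z₀c)) := by
    have h0 : Tendsto lam atTop (𝓝 0) := by
      simpa [hlam, one_div] using tendsto_one_div_add_atTop_nhds_zero_nat (𝕜 := ℝ)
    have h1 : Tendsto (fun n => lam n * ‖z₀c‖ ^ 2) atTop (𝓝 0) := by
      simpa using h0.mul_const (‖z₀c‖ ^ 2)
    simpa using tendsto_const_nhds.add h1
  have hvinfmin : ∀ x, auxPhi f c vinf ≤ auxPhi f c x := by
    intro x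
    have h := le_of_tendsto_of_tendsto' hphitend hrhstend hphiv
    exact h.trans (hmem x)
  have hnormle : ‖z₀c‖ ≤ ‖vinf‖ := hmin vinf hvinfmin
  have hatend : Tendsto a atTop (𝓝 (‖vinf‖ ^ 2)) := by
    have : Tendsto (fun n => ‖v n‖) atTop (𝓝 ‖vinf‖) :=
      (continuous_norm.tendsto vinf).comp hvinf
    simpa [ha] using this.pow 2
  have hLeq : L = ‖vinf‖ ^ 2 := tendsto_nhds_unique haL hatend
  -- pick N with a N close to L
  obtain ⟨N, hN⟩ := (Metric.tendsto_atTop.1 haL) η hη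
  have hNd := hN N le_rfl
  rw [Real.dist_eq] at hNd
  have haN : L - a N ≤ η := by
    have := abs_lt.1 hNd
    linarith [this.1]
  have hz₀L : ‖z₀c‖ ^ 2 ≤ L := by
    rw [hLeq]
    exact pow_le_pow_left₀ (norm_nonneg _) hnormle 2
  refine ⟨lam N, hlampos N, ?_⟩
  intro x hx
  have h1 : ‖x‖ ≤ ‖v N‖ := aux_mono hm hconv (hlampos N) le_rfl (hv N) hx
  have h2 : ‖v N‖ ≤ ‖x‖ := aux_mono hm hconv (hlampos N) le_rfl hx (hv N)
  have h3 : ‖x‖ = ‖v N‖ := le_antisymm h1 h2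
  rw [h3]
  have : a N = ‖v N‖ ^ 2 := rfl
  linarith

end Aux

/-- If `S(c) ≠ ∅` for all `c`, `z₀ : ℝ^m → H` is a continuous selection of
minimum-norm elements of `S(c)`, `w(t) → c*` is continuous on `[t₀,∞)`, and for every `t ≥ t₀`,
`z(t)` minimizes `u ↦ max_i (f_i(u) − w_i(t)) + (β/(2t^p))‖u‖²`, then `z(t) → z₀(c*)` strongly. -/
theorem stmt_5
    {H : Type*} [NormedAddCommGroup H] [InnerProductSpace ℝ H] [CompleteSpace H]
    {m : ℕ} (hm : 0 < m) (f : Fin m → H → ℝ)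
    (hconv : ∀ i, ConvexOn ℝ Set.univ (f i))
    (hdiff : ∀ i, Differentiable ℝ (f i))
    (hlip : ∀ i, ∃ L : ℝ≥0, LipschitzWith L (gradient (f i)))
    (t₀ β p : ℝ) (ht₀ : 0 < t₀) (hβ : 0 < β) (hp : 0 < p)
    (S : (Fin m → ℝ) → Set H)
    (hSdef : ∀ c : Fin m → ℝ,
      S c = {z : H | ∀ y : H, (⨆ i, (f i z - c i)) ≤ ⨆ i, (f i y - c i)})
    (hS : ∀ c : Fin m → ℝ, (S c).Nonempty)
    (z₀ : (Fin m → ℝ) → H) (hz₀cont : Continuous z₀)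
    (hz₀mem : ∀ c, z₀ c ∈ S c) (hz₀min : ∀ c, ∀ y ∈ S c, ‖z₀ c‖ ≤ ‖y‖)
    (w : ℝ → Fin m → ℝ) (hwcont : ContinuousOn w (Set.Ici t₀))
    (cstar : Fin m → ℝ) (hw : Tendsto w atTop (𝓝 cstar))
    (z : ℝ → H)
    (hz : ∀ t, t₀ ≤ t → ∀ u : H,
      (⨆ i, (f i (z t) - w t i)) + β / (2 * t ^ p) * ‖z t‖ ^ 2 ≤
        (⨆ i, (f i u - w t i)) + β / (2 * t ^ p) * ‖u‖ ^ 2) :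
    Tendsto (fun t => ‖z t - z₀ cstar‖) atTop (𝓝 0) := by
  have hf : ∀ i, Continuous (f i) := fun i => (hdiff i).continuous
  have hmemS : ∀ c : Fin m → ℝ, ∀ y : H, auxPhi f c (z₀ c) ≤ auxPhi f c y := by
    intro c y
    have h := hz₀mem c
    rw [hSdef c] at h
    exact h y
  have hminS : ∀ c : Fin m → ℝ, ∀ y : H,
      (∀ x, auxPhi f c y ≤ auxPhi f c x) → ‖z₀ c‖ ≤ ‖y‖ := by
    intro c y h
    apply hz₀min c y
    rw [hSdef c]
    exact h
  set lam : ℝ → ℝ := fun t => β / (2 * t ^ p) with hlamd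
  have hlam0 : Tendsto lam atTop (𝓝 0) := by
    have h1 : Tendsto (fun t : ℝ => t ^ p) atTop atTop := tendsto_rpow_atTop hp
    have h2 : Tendsto (fun t : ℝ => 2 * t ^ p) atTop atTop :=
      h1.const_mul_atTop (by norm_num)
    exact tendsto_const_nhds.div_atTop h2
  rw [Metric.tendsto_nhds]
  intro ε hε
  set η : ℝ := ε ^ 2 / 8 with hηd
  have hη : 0 < η := by positivity
  obtain ⟨lbar, hlbar, hlbar2⟩ := aux_pointwise hm hconv hf (hmemS cstar) (hminS cstar)
    (show 0 < η / 4 by linarith)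
  obtain ⟨vstar, hvstar⟩ := aux_exists hm hconv hf hlbar cstar ⟨_, hmemS cstar⟩
  have hvstarb : ‖z₀ cstar‖ ^ 2 - ‖vstar‖ ^ 2 ≤ η / 4 := hlbar2 vstar hvstar
  have hexbar : ∀ t : ℝ, ∃ v, AuxMin f lbar (w t) v := fun t =>
    aux_exists hm hconv hf hlbar (w t) ⟨_, hmemS (w t)⟩
  choose vbar hvbar using hexbar
  have hwc : Tendsto (fun t => ‖w t - cstar‖) atTop (𝓝 0) :=
    tendsto_iff_norm_sub_tendsto_zero.1 hw
  have hvbard : ∀ t, ‖vbar t - vstar‖ ≤ Real.sqrt (2 * ‖w t - cstar‖ / lbar) := by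
    intro t
    have h := aux_cstab hm hconv hlbar (hvbar t) hvstar
    have h2 : ‖vbar t - vstar‖ ^ 2 ≤ 2 * ‖w t - cstar‖ / lbar := by
      rw [le_div_iff₀ hlbar]
      linarith
    rw [← Real.sqrt_sq (norm_nonneg (vbar t - vstar))]
    exact Real.sqrt_le_sqrt h2
  have hrhs0 : Tendsto (fun t => Real.sqrt (2 * ‖w t - cstar‖ / lbar)) atTop (𝓝 0) := by
    have h1 : Tendsto (fun t => 2 * ‖w t - cstar‖ / lbar) atTop (𝓝 0) := by
      have h0 := hwc.const_mul (2:ℝ)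
      have h0' := h0.div_const lbar
      simpa using h0'
    have h2 := (Real.continuous_sqrt.tendsto 0).comp h1
    rw [Real.sqrt_zero] at h2
    exact h2
  have hvbart : Tendsto vbar atTop (𝓝 vstar) := by
    rw [tendsto_iff_norm_sub_tendsto_zero]
    exact squeeze_zero (fun t => norm_nonneg _) hvbard hrhs0
  have hvbarsq : Tendsto (fun t => ‖vbar t‖ ^ 2) atTop (𝓝 (‖vstar‖ ^ 2)) :=
    ((continuous_norm.tendsto vstar).comp hvbart).pow 2
  have hz₀w : Tendsto (fun t => z₀ (w t)) atTop (𝓝 (z₀ cstar)) :=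
    (hz₀cont.tendsto cstar).comp hw
  have hz₀wsq : Tendsto (fun t => ‖z₀ (w t)‖ ^ 2) atTop (𝓝 (‖z₀ cstar‖ ^ 2)) :=
    ((continuous_norm.tendsto _).comp hz₀w).pow 2
  have hz₀wd : Tendsto (fun t => ‖z₀ (w t) - z₀ cstar‖) atTop (𝓝 0) :=
    tendsto_iff_norm_sub_tendsto_zero.1 hz₀w
  have Ev1 : ∀ᶠ t : ℝ in atTop, t₀ ≤ t := eventually_ge_atTop t₀
  have Ev2 : ∀ᶠ t : ℝ in atTop, lam t ≤ lbar :=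
    (hlam0.eventually_lt_const hlbar).mono fun t ht => ht.le
  have Ev3 : ∀ᶠ t : ℝ in atTop, ‖z₀ (w t)‖ ^ 2 ≤ ‖z₀ cstar‖ ^ 2 + η / 4 :=
    (hz₀wsq.eventually_lt_const
      (show ‖z₀ cstar‖ ^ 2 < ‖z₀ cstar‖ ^ 2 + η / 4 by linarith)).mono fun t ht => ht.le
  have Ev4 : ∀ᶠ t : ℝ in atTop, ‖vstar‖ ^ 2 - η / 4 ≤ ‖vbar t‖ ^ 2 :=
    (hvbarsq.eventually_const_lt
      (show ‖vstar‖ ^ 2 - η / 4 < ‖vstar‖ ^ 2 by linarith)).mono fun t ht => ht.le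
  have Ev5 : ∀ᶠ t : ℝ in atTop, ‖z₀ (w t) - z₀ cstar‖ < ε / 2 :=
    hz₀wd.eventually_lt_const (by linarith)
  filter_upwards [Ev1, Ev2, Ev3, Ev4, Ev5] with t h1 h2 h3 h4 h5
  have hlamt : 0 < lam t := by
    have ht : 0 < t := lt_of_lt_of_le ht₀ h1
    have htp : 0 < t ^ p := Real.rpow_pos_of_pos ht p
    simp only [hlamd]
    positivity
  have hminz : AuxMin f (lam t) (w t) (z t) := by
    intro u
    have := hz t h1 u
    simpa [AuxMin, auxPhi, hlamd] using this
  have hmono : ‖vbar t‖ ≤ ‖z t‖ := aux_mono hm hconv hlamt h2 hminz (hvbar t)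
  have hmonosq : ‖vbar t‖ ^ 2 ≤ ‖z t‖ ^ 2 := pow_le_pow_left₀ (norm_nonneg _) hmono 2
  have hg : ‖z₀ (w t)‖ ^ 2 - ‖z t‖ ^ 2 ≤ η := by linarith
  have hdistsq : ‖z₀ (w t) - z t‖ ^ 2 ≤ 2 * (‖z₀ (w t)‖ ^ 2 - ‖z t‖ ^ 2) :=
    aux_dist_sq hm hconv hlamt hminz (hmemS (w t) (z t))
  have hd2 : ‖z₀ (w t) - z t‖ ^ 2 ≤ ε ^ 2 / 4 := by
    rw [hηd] at hg
    linarith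
  have hd : ‖z₀ (w t) - z t‖ ≤ ε / 2 := by
    nlinarith [norm_nonneg (z₀ (w t) - z t), hε]
  have htri : ‖z t - z₀ cstar‖ ≤ ‖z₀ (w t) - z t‖ + ‖z₀ (w t) - z₀ cstar‖ := by
    have heq : z t - z₀ cstar = (z t - z₀ (w t)) + (z₀ (w t) - z₀ cstar) := by abel
    rw [heq]
    have := norm_add_le (z t - z₀ (w t)) (z₀ (w t) - z₀ cstar)
    rwa [norm_sub_rev (z t) (z₀ (w t))] at this
  rw [Real.dist_eq, sub_zero, abs_of_nonneg (norm_nonneg _)]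
  linarith
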